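/- Let R be a commutative ring and consider the additive group x·F_2[x] (polynomials over F_2 with zero constant term) modulo the subgroup generated by all elements f^2 - f with f ∈ x·F_2[x]. Then the quotient group A = x·F_2[x]/(f^2 - f : f ∈ x·F_2[x]) is an F_2-vector space with basis given by the classes of monomials x^k for k odd, k ≥ 1. -/

import Mathlib

open Polynomial

/-- `x·𝔽₂[x]`: polynomials over `𝔽₂` with zero constant coefficient. -/
noncomputable def augIdeal : Submodule (ZMod 2) (Polynomial (ZMod 2)) :=
  LinearMap.ker (lcoeff (ZMod 2) 0)

/-- The subgroup of `x·𝔽₂[x]` generated by all elements `f² - f`, `f ∈ x·𝔽₂[x]`. -/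
noncomputable def sqSub : Submodule (ZMod 2) augIdeal :=
  Submodule.span (ZMod 2)
    {q : augIdeal | ∃ f : augIdeal, (q : Polynomial (ZMod 2)) = (f : Polynomial (ZMod 2)) ^ 2 - f}

/-- The element `x^k` of `x·𝔽₂[x]`, for `k ≠ 0`. -/
noncomputable def xel (k : ℕ) (hk : k ≠ 0) : augIdeal :=
  ⟨X ^ k, by simp [augIdeal, LinearMap.mem_ker, coeff_X_pow, Ne.symm hk]⟩

/-- The "odd part" map into odd naturals. -/
noncomputable def og (n : ℕ) : {k : ℕ // Odd k} :=
  if h : n = 0 then ⟨1, odd_one⟩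
  else ⟨ordCompl[2] n, by
    have := Nat.not_dvd_ordCompl Nat.prime_two h
    rw [Nat.odd_iff]
    omega⟩

lemma og_two_mul (n : ℕ) : og (n * 2) = og n := by
  rcases eq_or_ne n 0 with rfl | h
  · simp
  · have h2 : n * 2 ≠ 0 := by omega
    rw [og, og, dif_neg h, dif_neg h2]
    congr 1
    rw [Nat.ordCompl_mul]
    simp [Nat.Prime.factorization_self Nat.prime_two]

lemma og_odd {k : ℕ} (hk : Odd k) : og k = ⟨k, hk⟩ := by
  have h0 : k ≠ 0 := hk.pos.ne'
  rw [og, dif_neg h0]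
  congr 1
  have : ¬ (2 ∣ k) := by rw [Nat.odd_iff] at hk; omega
  rw [Nat.factorization_eq_zero_of_not_dvd this]
  simp

/-- Coordinate map. -/
noncomputable def EL : Polynomial (ZMod 2) →ₗ[ZMod 2] ({k : ℕ // Odd k} →₀ ZMod 2) where
  toFun p := Finsupp.mapDomain og p.toFinsupp.coeff
  map_add' p q := by simp only [toFinsupp_add]; exact Finsupp.mapDomain_add
  map_smul' c p := by simp only [toFinsupp_smul, RingHom.id_apply]; exact Finsupp.mapDomain_smul c _

lemma EL_monomial (n : ℕ) (a : ZMod 2) : EL (monomial n a) = Finsupp.single (og n) a := by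
  simp [EL, Finsupp.mapDomain_single, toFinsupp_monomial, AddMonoidAlgebra.coeff_single]

lemma EL_sq (p : Polynomial (ZMod 2)) : EL (p ^ 2) = EL p := by
  induction p using Polynomial.induction_on' with
  | add p q hp hq =>
      rw [add_pow_char, map_add, map_add, hp, hq]
  | monomial n a =>
      rw [monomial_pow, EL_monomial, EL_monomial, og_two_mul]
      congr 1
      exact ZMod.pow_card a

lemma sqSub_le_ker : sqSub ≤ LinearMap.ker (EL ∘ₗ augIdeal.subtype) := by
  rw [sqSub, Submodule.span_le]
  rintro q ⟨f, hf⟩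
  simp only [SetLike.mem_coe, LinearMap.mem_ker, LinearMap.comp_apply,
    Submodule.subtype_apply, hf]
  rw [map_sub, EL_sq, sub_self]

/-- The induced map on the quotient. -/
noncomputable def Ebar : (augIdeal ⧸ sqSub) →ₗ[ZMod 2] ({k : ℕ // Odd k} →₀ ZMod 2) :=
  sqSub.liftQ (EL ∘ₗ augIdeal.subtype) sqSub_le_ker

/-- Sending odd monomials to their classes. -/
noncomputable def FL : ({k : ℕ // Odd k} →₀ ZMod 2) →ₗ[ZMod 2] (augIdeal ⧸ sqSub) :=
  Finsupp.linearCombination (ZMod 2) (fun k : {k : ℕ // Odd k} =>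
    Submodule.Quotient.mk (xel k.1 k.2.pos.ne'))

lemma FL_single (k : {k : ℕ // Odd k}) :
    FL (Finsupp.single k 1) = Submodule.Quotient.mk (xel k.1 k.2.pos.ne') := by
  simp [FL]

lemma Ebar_mk (f : augIdeal) : Ebar (Submodule.Quotient.mk f) = EL f.1 := rfl

lemma xel_eq {k j : ℕ} (h : k = j) (hk : k ≠ 0) (hj : j ≠ 0) : xel k hk = xel j hj := by
  subst h; rfl

lemma mk_xel_double {j k : ℕ} (hj : j ≠ 0) (hk : k ≠ 0) (h : k = j * 2) :
    (Submodule.Quotient.mk (xel k hk) :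
      augIdeal ⧸ sqSub) = Submodule.Quotient.mk (xel j hj) := by
  subst h
  rw [Submodule.Quotient.eq]
  apply Submodule.subset_span
  refine ⟨xel j hj, ?_⟩
  push_cast [xel]
  rw [← pow_mul]

lemma mk_xel_pow_mul (m o : ℕ) (ho : o ≠ 0) :
    (Submodule.Quotient.mk (xel (2 ^ m * o) (by positivity)) :
      augIdeal ⧸ sqSub) = Submodule.Quotient.mk (xel o ho) := by
  induction m with
  | zero => simp only [pow_zero, one_mul]
  | succ m ih =>
      have h2 : 2 ^ m * o ≠ 0 := by positivity
      exact (mk_xel_double h2 _ (by ring)).trans ih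

lemma mk_xel_og (k : ℕ) (hk : k ≠ 0) :
    (Submodule.Quotient.mk (xel k hk) : augIdeal ⧸ sqSub)
      = Submodule.Quotient.mk (xel (og k).1 (og k).2.pos.ne') := by
  have hco : (og k).1 = ordCompl[2] k := by rw [og, dif_neg hk]
  have ho : (og k).1 ≠ 0 := (og k).2.pos.ne'
  have h1 : k = 2 ^ (k.factorization 2) * (og k).1 := by
    rw [hco]; exact (Nat.ordProj_mul_ordCompl_eq_self k 2).symm
  rw [xel_eq h1 hk (by positivity)]
  exact mk_xel_pow_mul (k.factorization 2) (og k).1 ho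

lemma EL_xel (k : ℕ) (hk : k ≠ 0) : EL ((xel k hk : augIdeal) : Polynomial (ZMod 2))
    = Finsupp.single (og k) 1 := by
  have : ((xel k hk : augIdeal) : Polynomial (ZMod 2)) = monomial k 1 := by
    simp [xel, monomial_one_right_eq_X_pow]
  rw [this, EL_monomial]

lemma Ebar_comp_FL : Ebar ∘ₗ FL = LinearMap.id := by
  apply Finsupp.lhom_ext'
  intro k
  apply LinearMap.ext_ring
  simp only [LinearMap.comp_apply, Finsupp.lsingle_apply, LinearMap.id_apply]
  rw [FL_single, Ebar_mk, EL_xel, og_odd k.2]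

lemma mem_span_xel (g : augIdeal) :
    g ∈ Submodule.span (ZMod 2) (Set.range fun k : {n : ℕ // n ≠ 0} => xel k.1 k.2) := by
  have hf0 : (g : Polynomial (ZMod 2)).coeff 0 = 0 := g.2
  have hrep : g = ∑ k ∈ (g : Polynomial (ZMod 2)).support.attach,
      ((g : Polynomial (ZMod 2)).coeff k.1) • xel k.1
        (fun h0 => (Polynomial.mem_support_iff.mp k.2) (by rw [h0]; exact hf0)) := by
    apply Subtype.ext
    push_cast
    conv_lhs => rw [Polynomial.as_sum_support (g : Polynomial (ZMod 2))]
    rw [← Finset.sum_attach ((g : Polynomial (ZMod 2)).support)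
      (fun i => monomial i ((g : Polynomial (ZMod 2)).coeff i))]
    refine Finset.sum_congr rfl fun k _ => ?_
    rw [xel, Polynomial.smul_eq_C_mul, C_mul_X_pow_eq_monomial]
  have hmem : (∑ k ∈ (g : Polynomial (ZMod 2)).support.attach,
      ((g : Polynomial (ZMod 2)).coeff k.1) • xel k.1
        (fun h0 => (Polynomial.mem_support_iff.mp k.2) (by rw [h0]; exact hf0))) ∈
      Submodule.span (ZMod 2) (Set.range fun k : {n : ℕ // n ≠ 0} => xel k.1 k.2) :=
    Submodule.sum_mem _ fun k _ => Submodule.smul_mem _ _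
      (Submodule.subset_span ⟨⟨k.1, fun h0 =>
        (Polynomial.mem_support_iff.mp k.2) (by rw [h0]; exact hf0)⟩, rfl⟩)
  rw [← hrep] at hmem
  exact hmem

lemma FL_EL (g : augIdeal) : FL (EL (g : Polynomial (ZMod 2))) = Submodule.Quotient.mk g := by
  refine Submodule.span_induction (p := fun (x : augIdeal) _ => FL (EL (x : Polynomial (ZMod 2)))
      = (Submodule.Quotient.mk x : augIdeal ⧸ sqSub)) ?_ ?_ ?_ ?_ (mem_span_xel g)
  · rintro x ⟨⟨k, hk⟩, rfl⟩
    rw [EL_xel k hk, FL_single, mk_xel_og k hk]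
  · simp
  · intro x y _ _ hx hy
    push_cast
    rw [map_add, map_add, hx, hy, ← Submodule.Quotient.mk_add]
  · intro a x _ hx
    push_cast
    rw [map_smul, map_smul, hx, ← Submodule.Quotient.mk_smul]

lemma FL_comp_Ebar : FL ∘ₗ Ebar = LinearMap.id := by
  apply Submodule.linearMap_qext
  apply LinearMap.ext
  intro f
  simp only [LinearMap.comp_apply, Submodule.mkQ_apply, LinearMap.id_apply]
  rw [Ebar_mk]
  exact FL_EL f

/-- `A = x·𝔽₂[x]/(f²-f)` is an `𝔽₂`-vector space with basis the classes of the
monomials `x^k` with `k` odd. -/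
theorem basis_odd_monomials :
    ∃ b : Module.Basis {k : ℕ // Odd k} (ZMod 2) (augIdeal ⧸ sqSub),
      ∀ k : {k : ℕ // Odd k},
        b k = Submodule.Quotient.mk (xel k.1 k.2.pos.ne') := by
  refine ⟨Module.Basis.ofRepr (LinearEquiv.ofLinear Ebar FL Ebar_comp_FL FL_comp_Ebar), fun k => ?_⟩
  rw [← Module.Basis.repr_symm_single_one]
  show (LinearEquiv.ofLinear Ebar FL Ebar_comp_FL FL_comp_Ebar).symm (Finsupp.single k 1) = _
  rw [LinearEquiv.ofLinear_symm_apply]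
  exact FL_single k
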